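/- Fix q ∈ ℂ with 0 < |q| < 1 and set ζ := q/conj(q). On ℓ²(ℤ⁶) with standard orthonormal basis (e_{i,j,k,l,s,t}), let Y₁₂ and Y₁₃ be the unitaries induced by e_{i,j,k,l,s,t} ↦ e_{i,j,k+i+j,l,s,t} and e_{i,j,k,l,s,t} ↦ e_{i,j,k,l,s+i+j,t} respectively, and let X₂₃ be the linear operator defined on finitely supported vectors by X₂₃ e_{i,j,k,l,s,t} = ζ^{−l} q^{s−k+1} e_{i,j,k−1,l−1,s−1,t+1}. Then (Y₁₂∘Y₁₃)⁻¹ ∘ X₂₃ ∘ (Y₁₂∘Y₁₃) ξ = X₂₃ ξ for every finitely supported vector ξ; that is, Y₁₂Y₁₃ commutes with X₂₃. -/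

import Mathlib

/-!
STATEMENT 7: For q ∈ ℂ with 0 < |q| < 1 and ζ := q/conj(q), on ℓ²(ℤ⁶) the unitary
Y₁₂Y₁₃ commutes with the densely defined operator
X₂₃ e_{i,j,k,l,s,t} = ζ^{−l} q^{s−k+1} e_{i,j,k−1,l−1,s−1,t+1}:
(Y₁₂Y₁₃)⁻¹ ∘ X₂₃ ∘ (Y₁₂Y₁₃) ξ = X₂₃ ξ for every finitely supported ξ.
-/

noncomputable section

/-- The Hilbert space ℓ²(ℤ⁶). -/
abbrev H : Type := lp (fun _ : ℤ × ℤ × ℤ × ℤ × ℤ × ℤ => ℂ) 2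

/-- The dense subspace of finitely supported vectors in ℓ²(ℤ⁶). -/
abbrev F : Type := (ℤ × ℤ × ℤ × ℤ × ℤ × ℤ) →₀ ℂ

/-- The standard orthonormal basis vector of ℓ²(ℤ⁶). -/
noncomputable def e (i j k l s t : ℤ) : H := lp.single 2 (i, j, k, l, s, t) 1

/-- The standard basis vector of the finitely supported subspace. -/
noncomputable def δ (i j k l s t : ℤ) : F := Finsupp.single (i, j, k, l, s, t) 1

theorem Y12Y13_commutes_with_X23
    (q : ℂ) (hq0 : 0 < ‖q‖) (hq1 : ‖q‖ < 1)
    (ζ : ℂ) (hζ : ζ = q / (starRingEnd ℂ) q)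
    -- the unitaries Y₁₂ and Y₁₃ on ℓ²(ℤ⁶)
    (Y12 Y13 : H ≃ₗᵢ[ℂ] H)
    (hY12 : ∀ i j k l s t : ℤ, Y12 (e i j k l s t) = e i j (k + i + j) l s t)
    (hY13 : ∀ i j k l s t : ℤ, Y13 (e i j k l s t) = e i j k l (s + i + j) t)
    -- their restrictions to finitely supported vectors
    (Y12f Y13f : F →ₗ[ℂ] F)
    (hY12f : ∀ i j k l s t : ℤ, Y12f (δ i j k l s t) = δ i j (k + i + j) l s t)
    (hY13f : ∀ i j k l s t : ℤ, Y13f (δ i j k l s t) = δ i j k l (s + i + j) t)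
    -- the operator X₂₃ on finitely supported vectors
    (X23 : F →ₗ[ℂ] H)
    (hX23 : ∀ i j k l s t : ℤ, X23 (δ i j k l s t)
      = (ζ ^ (-l) * q ^ (s - k + 1)) • e i j (k - 1) (l - 1) (s - 1) (t + 1)) :
    ∀ ξ : F, Y13.symm (Y12.symm (X23 (Y12f (Y13f ξ)))) = X23 ξ := by
  intro ξ
  induction ξ using Finsupp.induction_linear with
  | zero => simp
  | add f g hf hg => simp only [map_add, hf, hg]
  | single a b =>
    obtain ⟨i, j, k, l, s, t⟩ := a
    have hb : (Finsupp.single (i,j,k,l,s,t) b : F) = b • δ i j k l s t := by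
      simp [δ, Finsupp.smul_single]
    rw [hb]
    simp only [map_smul]
    congr 1
    rw [hY13f, hY12f, hX23, map_smul, map_smul, hX23]
    have h1 : k + i + j - 1 = (k - 1) + i + j := by ring
    have h2 : s + i + j - 1 = (s - 1) + i + j := by ring
    have h3 : s + i + j - (k + i + j) + 1 = s - k + 1 := by ring
    rw [h1, h2, h3, ← hY12 i j (k-1) (l-1) ((s-1)+i+j) (t+1),
      Y12.symm_apply_apply, ← hY13 i j (k-1) (l-1) (s-1) (t+1),
      Y13.symm_apply_apply]
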